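/- Let A, B ∈ ℝ^{d×d} be symmetric positive definite and c, o ∈ ℝ^d, and suppose the ellipsoids E(A,c) and E(B,o) are disjoint. Then the supremum over unit vectors p_s ∈ ℝ^d of the barrier value h(A,c,B,o,p_s) equals the Euclidean distance between the two ellipsoids, i.e. sup{h(A,c,B,o,p_s) : ‖p_s‖ = 1} = inf{‖x − y‖ : x ∈ E(A,c), y ∈ E(B,o)}, and the supremum is attained at some unit vector p_s. -/

import Mathlib

open scoped RealInnerProductSpace

/-- The linear action of a matrix `A` on `EuclideanSpace ℝ (Fin d)`. -/
noncomputable def mv {d : ℕ} (A : Matrix (Fin d) (Fin d) ℝ)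
    (x : EuclideanSpace ℝ (Fin d)) : EuclideanSpace ℝ (Fin d) :=
  (WithLp.equiv 2 (Fin d → ℝ)).symm (A.mulVec ((WithLp.equiv 2 (Fin d → ℝ)) x))

/-- The ellipsoid `E(A, c) = {c + A·s : ‖s‖ ≤ 1}`. -/
noncomputable def ellipsoid {d : ℕ} (A : Matrix (Fin d) (Fin d) ℝ)
    (c : EuclideanSpace ℝ (Fin d)) : Set (EuclideanSpace ℝ (Fin d)) :=
  {y | ∃ s : EuclideanSpace ℝ (Fin d), ‖s‖ ≤ 1 ∧ y = c + mv A s}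

/-- The barrier value `h(A,c,B,o,p_s) = (−‖B·n‖ + ⟪o − c, n⟫ − 1)/‖n‖` with
`n = A⁻¹·p_s` (Eq. (9) of the paper). -/
noncomputable def barrier {d : ℕ} (A : Matrix (Fin d) (Fin d) ℝ)
    (c : EuclideanSpace ℝ (Fin d)) (B : Matrix (Fin d) (Fin d) ℝ)
    (o : EuclideanSpace ℝ (Fin d)) (ps : EuclideanSpace ℝ (Fin d)) : ℝ :=
  (-‖mv B (mv A⁻¹ ps)‖ + ⟪o - c, mv A⁻¹ ps⟫ - 1) / ‖mv A⁻¹ ps‖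

section Helpers

variable {d : ℕ}

lemma mv_add (A : Matrix (Fin d) (Fin d) ℝ) (x y : EuclideanSpace ℝ (Fin d)) :
    mv A (x + y) = mv A x + mv A y := by
  simp [mv, Matrix.mulVec_add]

lemma mv_smul (A : Matrix (Fin d) (Fin d) ℝ) (r : ℝ) (x : EuclideanSpace ℝ (Fin d)) :
    mv A (r • x) = r • mv A x := by
  simp [mv, Matrix.mulVec_smul]

lemma mv_zero (A : Matrix (Fin d) (Fin d) ℝ) : mv A (0 : EuclideanSpace ℝ (Fin d)) = 0 := by
  simp [mv]

lemma mv_mv (A B : Matrix (Fin d) (Fin d) ℝ) (x : EuclideanSpace ℝ (Fin d)) :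
    mv A (mv B x) = mv (A * B) x := by
  simp [mv, Matrix.mulVec_mulVec]

lemma mv_one (x : EuclideanSpace ℝ (Fin d)) : mv (1 : Matrix (Fin d) (Fin d) ℝ) x = x := by
  simp [mv]

open Matrix in
lemma mv_inner (A : Matrix (Fin d) (Fin d) ℝ) (hA : A.IsHermitian)
    (x y : EuclideanSpace ℝ (Fin d)) : ⟪mv A x, y⟫ = ⟪x, mv A y⟫ := by
  have hAT : Aᵀ = A := by
    have h2 : Aᴴ = A := hA
    simpa [Matrix.conjTranspose_eq_transpose_of_trivial] using h2
  simp only [mv, PiLp.inner_apply, RCLike.inner_apply, starRingEnd_apply, star_trivial]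
  calc _ = dotProduct (A.mulVec x.ofLp) y.ofLp := by simp [dotProduct, mul_comm]
    _ = dotProduct x.ofLp (A.mulVec y.ofLp) := by
        rw [dotProduct_comm, Matrix.dotProduct_mulVec, ← Matrix.mulVec_transpose, hAT,
          dotProduct_comm]
    _ = _ := by simp [dotProduct, mul_comm]

lemma mv_continuous (A : Matrix (Fin d) (Fin d) ℝ) : Continuous (mv A) := by
  have h : IsLinearMap ℝ (mv A) := ⟨mv_add A, mv_smul A⟩
  exact (IsLinearMap.mk' (mv A) h).continuous_of_finiteDimensional

lemma mv_inv_cancel (A : Matrix (Fin d) (Fin d) ℝ) (hA : A.PosDef)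
    (x : EuclideanSpace ℝ (Fin d)) : mv A (mv A⁻¹ x) = x := by
  rw [mv_mv, Matrix.mul_nonsing_inv _ hA.det_pos.ne'.isUnit, mv_one]

lemma mv_inv_cancel' (A : Matrix (Fin d) (Fin d) ℝ) (hA : A.PosDef)
    (x : EuclideanSpace ℝ (Fin d)) : mv A⁻¹ (mv A x) = x := by
  rw [mv_mv, Matrix.nonsing_inv_mul _ hA.det_pos.ne'.isUnit, mv_one]

lemma mv_ne_zero (A : Matrix (Fin d) (Fin d) ℝ) (hA : A.PosDef)
    {x : EuclideanSpace ℝ (Fin d)} (hx : x ≠ 0) : mv A x ≠ 0 := by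
  intro h
  apply hx
  have h2 := congrArg (mv A⁻¹) h
  rwa [mv_inv_cancel' A hA, mv_zero] at h2

/-- The barrier values over unit vectors coincide with the values of
`u ↦ ⟪o - c, u⟫ - ‖A u‖ - ‖B u‖` over unit vectors. -/
lemma barrier_set_eq (A B : Matrix (Fin d) (Fin d) ℝ) (hA : A.PosDef)
    (c o : EuclideanSpace ℝ (Fin d)) :
    {r : ℝ | ∃ ps : EuclideanSpace ℝ (Fin d), ‖ps‖ = 1 ∧ r = barrier A c B o ps} =
    {r : ℝ | ∃ u : EuclideanSpace ℝ (Fin d), ‖u‖ = 1 ∧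
        r = ⟪o - c, u⟫ - ‖mv A u‖ - ‖mv B u‖} := by
  ext r
  simp only [Set.mem_setOf_eq]
  constructor
  · rintro ⟨ps, hps, rfl⟩
    have hps0 : ps ≠ 0 := by intro h; rw [h] at hps; simp at hps
    set n := mv A⁻¹ ps with hn
    have hAn : mv A n = ps := mv_inv_cancel A hA ps
    have hn0 : n ≠ 0 := by
      intro h; apply hps0; rw [← hAn, h, mv_zero]
    have hnn : (0:ℝ) < ‖n‖ := norm_pos_iff.mpr hn0
    refine ⟨‖n‖⁻¹ • n, ?_, ?_⟩
    · rw [norm_smul, Real.norm_eq_abs, abs_of_pos (inv_pos.mpr hnn), inv_mul_cancel₀ hnn.ne']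
    · rw [barrier]
      rw [← hn, mv_smul, mv_smul, norm_smul, norm_smul, real_inner_smul_right, hAn, hps,
        Real.norm_eq_abs, abs_of_pos (inv_pos.mpr hnn), div_eq_mul_inv]
      ring
  · rintro ⟨u, hu, rfl⟩
    have hu0 : u ≠ 0 := by intro h; rw [h] at hu; simp at hu
    have hAu : mv A u ≠ 0 := mv_ne_zero A hA hu0
    have ha : (0:ℝ) < ‖mv A u‖ := norm_pos_iff.mpr hAu
    set a := ‖mv A u‖ with hadef
    refine ⟨mv A (a⁻¹ • u), ?_, ?_⟩
    · rw [mv_smul, norm_smul, Real.norm_eq_abs, abs_of_pos (inv_pos.mpr ha),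
        inv_mul_cancel₀ ha.ne']
    · rw [barrier, mv_inv_cancel' A hA]
      rw [mv_smul, norm_smul, norm_smul, real_inner_smul_right,
        Real.norm_eq_abs, abs_of_pos (inv_pos.mpr ha), hu,
        eq_div_iff (by positivity : a⁻¹ * (1:ℝ) ≠ 0)]
      linear_combination (-1:ℝ) * mul_inv_cancel₀ ha.ne'

end Helpers

set_option maxHeartbeats 1000000
/-- If the ellipsoids `E(A,c)` and `E(B,o)` are disjoint,
the supremum over unit vectors `p_s` of the barrier value `h(A,c,B,o,p_s)`
is attained and equals the Euclidean distance between the two ellipsoids. -/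
theorem stmt7 {d : ℕ} (A B : Matrix (Fin d) (Fin d) ℝ)
    (hA : A.PosDef) (hB : B.PosDef)
    (c o : EuclideanSpace ℝ (Fin d))
    (hdisj : ellipsoid A c ∩ ellipsoid B o = ∅) :
    IsGreatest {r : ℝ | ∃ ps : EuclideanSpace ℝ (Fin d), ‖ps‖ = 1 ∧
        r = barrier A c B o ps}
      (sInf {r : ℝ | ∃ x ∈ ellipsoid A c, ∃ y ∈ ellipsoid B o, r = ‖x - y‖}) := by
  classical
  -- the difference set C = E(A,c) - E(B,o)
  set C : Set (EuclideanSpace ℝ (Fin d)) :=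
    {z | ∃ s t : EuclideanSpace ℝ (Fin d), ‖s‖ ≤ 1 ∧ ‖t‖ ≤ 1 ∧
      z = (c - o) + (mv A s - mv B t)} with hCdef
  have hLlin : IsLinearMap ℝ (fun p : EuclideanSpace ℝ (Fin d) × EuclideanSpace ℝ (Fin d) =>
      mv A p.1 - mv B p.2) := by
    constructor
    · intro p q
      simp only [Prod.fst_add, Prod.snd_add, mv_add]
      abel
    · intro r p
      simp only [Prod.smul_fst, Prod.smul_snd, mv_smul, smul_sub]
  set L := IsLinearMap.mk' _ hLlin with hLdef
  set K : Set (EuclideanSpace ℝ (Fin d) × EuclideanSpace ℝ (Fin d)) :=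
    Metric.closedBall 0 1 ×ˢ Metric.closedBall 0 1 with hKdef
  have hC_img : C = (fun z => (c - o) + z) '' (⇑L '' K) := by
    ext z
    constructor
    · rintro ⟨s, t, hs, ht, rfl⟩
      exact ⟨L (s, t), ⟨(s, t), ⟨by simpa using hs, by simpa using ht⟩, rfl⟩, by
        simp [hLdef]⟩
    · rintro ⟨-, ⟨⟨s, t⟩, ⟨hs, ht⟩, rfl⟩, rfl⟩
      exact ⟨s, t, by simpa using hs, by simpa using ht, by simp [hLdef]⟩
  have hconv : Convex ℝ C := by
    rw [hC_img]
    exact (((convex_closedBall _ _).prod (convex_closedBall _ _)).linear_image L).translate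
      (c - o)
  have hcpt : IsCompact C := by
    rw [hC_img]
    exact ((((isCompact_closedBall _ _).prod (isCompact_closedBall _ _)).image
      L.continuous_of_finiteDimensional)).image (continuous_const.add continuous_id)
  have hne : C.Nonempty := ⟨c - o, 0, 0, by simp, by simp, by simp [mv_zero]⟩
  have h0 : (0 : EuclideanSpace ℝ (Fin d)) ∉ C := by
    rintro ⟨s, t, hs, ht, hz⟩
    have hx : c + mv A s = o + mv B t := by
      have h1 : (c + mv A s) - (o + mv B t) = 0 := by
        rw [← sub_add_sub_comm]; exact hz.symm
      exact sub_eq_zero.mp h1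
    have hmem : (c + mv A s) ∈ ellipsoid A c ∩ ellipsoid B o :=
      ⟨⟨s, hs, rfl⟩, ⟨t, ht, hx⟩⟩
    rw [hdisj] at hmem
    exact hmem
  -- minimizer of the norm on C
  obtain ⟨z0, hz0C, hz0min⟩ := hcpt.exists_isMinOn hne continuous_norm.continuousOn
  have hmin : ∀ z ∈ C, ‖z0‖ ≤ ‖z‖ := fun z hz => hz0min hz
  have hz0ne : z0 ≠ 0 := fun h => h0 (h ▸ hz0C)
  set D := ‖z0‖ with hD
  have hDpos : (0:ℝ) < D := norm_pos_iff.mpr hz0ne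
  -- the infimum equals D
  have hsinf : sInf {r : ℝ | ∃ x ∈ ellipsoid A c, ∃ y ∈ ellipsoid B o, r = ‖x - y‖} = D := by
    apply IsLeast.csInf_eq
    constructor
    · obtain ⟨s, t, hs, ht, hz⟩ := hz0C
      refine ⟨c + mv A s, ⟨s, hs, rfl⟩, o + mv B t, ⟨t, ht, rfl⟩, ?_⟩
      rw [hD, hz, ← sub_add_sub_comm]
    · rintro r ⟨x, ⟨s, hs, rfl⟩, y, ⟨t, ht, rfl⟩, rfl⟩
      have hmem : (c + mv A s) - (o + mv B t) ∈ C :=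
        ⟨s, t, hs, ht, by rw [← sub_add_sub_comm]⟩
      exact hmin _ hmem
  -- variational inequality
  have hvar : ∀ w ∈ C, D ^ 2 ≤ ⟪z0, w⟫ := by
    haveI : Nonempty ↑C := ⟨⟨z0, hz0C⟩⟩
    have hiInf : ‖(0 : EuclideanSpace ℝ (Fin d)) - z0‖ = ⨅ w : C, ‖(0:EuclideanSpace ℝ (Fin d)) - w‖ := by
      apply le_antisymm
      · exact le_ciInf fun w => by
          simpa using hmin w w.2
      · exact ciInf_le
          (f := fun w : C => ‖(0:EuclideanSpace ℝ (Fin d)) - (w:EuclideanSpace ℝ (Fin d))‖)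
          ⟨0, by rintro r ⟨w, rfl⟩; positivity⟩ ⟨z0, hz0C⟩
    have hproj := (norm_eq_iInf_iff_real_inner_le_zero hconv hz0C).mp hiInf
    intro w hw
    have h1 := hproj w hw
    rw [zero_sub, inner_neg_left, inner_sub_right] at h1
    have h2 : ⟪z0, z0⟫ = D ^ 2 := real_inner_self_eq_norm_sq z0
    linarith
  -- decompose z0
  obtain ⟨s0, t0, hs0, ht0, hz0eq⟩ := hz0C
  -- upper bound for all unit vectors
  have hub : ∀ u : EuclideanSpace ℝ (Fin d), ‖u‖ = 1 →
      ⟪o - c, u⟫ - ‖mv A u‖ - ‖mv B u‖ ≤ D := by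
    intro u hu
    have hAs : ⟪mv A s0, u⟫ ≤ ‖mv A u‖ := by
      rw [mv_inner A hA.isHermitian]
      calc ⟪s0, mv A u⟫ ≤ ‖s0‖ * ‖mv A u‖ := real_inner_le_norm _ _
        _ ≤ 1 * ‖mv A u‖ := mul_le_mul_of_nonneg_right hs0 (norm_nonneg _)
        _ = ‖mv A u‖ := one_mul _
    have hBt : -‖mv B u‖ ≤ ⟪mv B t0, u⟫ := by
      rw [mv_inner B hB.isHermitian]
      have h1 := abs_real_inner_le_norm t0 (mv B u)
      have h2 : ‖t0‖ * ‖mv B u‖ ≤ ‖mv B u‖ := by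
        nlinarith [norm_nonneg (mv B u)]
      nlinarith [neg_abs_le ⟪t0, mv B u⟫]
    have hcs : ⟪-z0, u⟫ ≤ D := by
      calc ⟪-z0, u⟫ ≤ ‖-z0‖ * ‖u‖ := real_inner_le_norm _ _
        _ = D := by rw [norm_neg, hu, mul_one, hD]
    have hexp : ⟪-z0, u⟫ = ⟪o - c, u⟫ - ⟪mv A s0, u⟫ + ⟪mv B t0, u⟫ := by
      rw [hz0eq]
      simp only [inner_add_left, inner_sub_left, inner_neg_left]
      ring
    linarith
  -- the maximizing unit vector
  set u0 : EuclideanSpace ℝ (Fin d) := (-D⁻¹) • z0 with hu0def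
  have hu0 : ‖u0‖ = 1 := by
    rw [hu0def, norm_smul, Real.norm_eq_abs, abs_neg, abs_of_pos (inv_pos.mpr hDpos),
      ← hD, inv_mul_cancel₀ hDpos.ne']
  have hu0ne : u0 ≠ 0 := by intro h; rw [h] at hu0; simp at hu0
  have hz0u : z0 = -(D • u0) := by
    rw [hu0def, smul_smul, mul_neg, mul_inv_cancel₀ hDpos.ne', neg_smul, one_smul, neg_neg]
  have hAu0 : mv A u0 ≠ 0 := mv_ne_zero A hA hu0ne
  have hBu0 : mv B u0 ≠ 0 := mv_ne_zero B hB hu0ne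
  set a := ‖mv A u0‖ with hadef
  set b := ‖mv B u0‖ with hbdef
  have hapos : (0:ℝ) < a := norm_pos_iff.mpr hAu0
  have hbpos : (0:ℝ) < b := norm_pos_iff.mpr hBu0
  set s1 : EuclideanSpace ℝ (Fin d) := a⁻¹ • mv A u0 with hs1def
  set t1 : EuclideanSpace ℝ (Fin d) := -(b⁻¹ • mv B u0) with ht1def
  have hs1 : ‖s1‖ ≤ 1 := by
    rw [hs1def, norm_smul, Real.norm_eq_abs, abs_of_pos (inv_pos.mpr hapos), ← hadef,
      inv_mul_cancel₀ hapos.ne']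
  have ht1 : ‖t1‖ ≤ 1 := by
    rw [ht1def, norm_neg, norm_smul, Real.norm_eq_abs, abs_of_pos (inv_pos.mpr hbpos), ← hbdef,
      inv_mul_cancel₀ hbpos.ne']
  have hwC : (c - o) + (mv A s1 - mv B t1) ∈ C := ⟨s1, t1, hs1, ht1, rfl⟩
  have h1 : D ^ 2 ≤ ⟪z0, (c - o) + (mv A s1 - mv B t1)⟫ := hvar _ hwC
  have h2 : ⟪z0, (c - o) + (mv A s1 - mv B t1)⟫ =
      -(D * ⟪u0, (c - o) + (mv A s1 - mv B t1)⟫) := by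
    rw [hz0u, inner_neg_left, real_inner_smul_left]
  have hinnAs1 : ⟪u0, mv A s1⟫ = a := by
    rw [← mv_inner A hA.isHermitian, hs1def, real_inner_smul_right,
      real_inner_self_eq_norm_sq, ← hadef]
    field_simp
  have hinnBt1 : ⟪u0, mv B t1⟫ = -b := by
    rw [← mv_inner B hB.isHermitian, ht1def, inner_neg_right, real_inner_smul_right,
      real_inner_self_eq_norm_sq, ← hbdef]
    field_simp
  have h3 : ⟪u0, (c - o) + (mv A s1 - mv B t1)⟫ = ⟪u0, c - o⟫ + a + b := by
    simp only [inner_add_right, inner_sub_right, hinnAs1, hinnBt1]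
    ring
  have h4 : ⟪u0, c - o⟫ + a + b ≤ -D := by
    nlinarith [h1, h2, h3]
  have h5 : D ≤ ⟪o - c, u0⟫ - a - b := by
    have hcomm : ⟪o - c, u0⟫ = -⟪u0, c - o⟫ := by
      rw [real_inner_comm, ← neg_sub c o, inner_neg_right]
    rw [hcomm]
    linarith
  have h6 : ⟪o - c, u0⟫ - ‖mv A u0‖ - ‖mv B u0‖ = D :=
    le_antisymm (hub u0 hu0) (by rw [← hadef, ← hbdef]; linarith)
  -- assemble
  rw [hsinf, barrier_set_eq A B hA c o]
  constructor
  · exact ⟨u0, hu0, h6.symm⟩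
  · rintro r ⟨u, hu, rfl⟩
    exact hub u hu
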